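/- Let κ be an infinite cardinal and {F_α : α < κ} a cofinal subset of Fin(κ)^ℕ (ordered coordinatewise by inclusion). Then the family {F'_α : α < κ}, defined by F'_α(n) := F_α(n) \ {α} for all n, is also cofinal in Fin(κ)^ℕ. -/
import Mathlib


open Set Filter

universe u

/-- Least cardinality of a cofinal subset of a preorder. -/
noncomputable def poCof (α : Type u) [Preorder α] : Cardinal.{u} :=
  sInf { c | ∃ S : Set α, (∀ a : α, ∃ b ∈ S, a ≤ b) ∧ Cardinal.mk S = c }

/-- `cof([X]^ℵ₀)`: cofinality of the family of countably infinite subsets of `X`,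
ordered by inclusion. -/
noncomputable def ctblCof (X : Type u) : Cardinal.{u} :=
  poCof { A : Set X // A.Countable ∧ A.Infinite }

/-- The dominating number 𝔡. -/
noncomputable def dNum : Cardinal :=
  sInf { c | ∃ D : Set (ℕ → ℕ),
    (∀ f : ℕ → ℕ, ∃ g ∈ D, ∀ᶠ n in atTop, f n ≤ g n) ∧ Cardinal.mk D = c }

/-- The unbounding number 𝔟. -/
noncomputable def bNum : Cardinal :=
  sInf { c | ∃ B : Set (ℕ → ℕ),
    (∀ g : ℕ → ℕ, ∃ f ∈ B, ¬ ∀ᶠ n in atTop, f n ≤ g n) ∧ Cardinal.mk B = c }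

/-- An almost disjoint family on ℕ. -/
def AlmostDisjoint (𝒜 : Set (Set ℕ)) : Prop :=
  (∀ A ∈ 𝒜, A.Infinite) ∧ ∀ A ∈ 𝒜, ∀ B ∈ 𝒜, A ≠ B → (A ∩ B).Finite

/-- The underlying set of the Isbell–Mrówka space `Ψ(𝒜) = ℕ ∪ 𝒜`. -/
abbrev PsiSpace (𝒜 : Set (Set ℕ)) : Type := ℕ ⊕ ↥𝒜

/-- The Isbell–Mrówka topology: naturals are isolated, and basic neighborhoods
of `A ∈ 𝒜` are `{A} ∪ (A \ F)` for finite `F`. -/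
instance psiTop (𝒜 : Set (Set ℕ)) : TopologicalSpace (PsiSpace 𝒜) where
  IsOpen U := ∀ A : 𝒜, Sum.inr A ∈ U → { n : ℕ | n ∈ (A : Set ℕ) ∧ Sum.inl n ∉ U }.Finite
  isOpen_univ := by
    intro A _
    convert Set.finite_empty using 1
    ext n; simp
  isOpen_inter := by
    intro U V hU hV A hA
    apply ((hU A hA.1).union (hV A hA.2)).subset
    rintro n ⟨h1, h2⟩
    by_cases h : Sum.inl n ∈ U
    · exact Or.inr ⟨h1, fun hv => h2 ⟨h, hv⟩⟩
    · exact Or.inl ⟨h1, h⟩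
  isOpen_sUnion := by
    intro s hs A hA
    obtain ⟨t, ht, hAt⟩ := hA
    apply (hs t ht A hAt).subset
    rintro n ⟨h1, h2⟩
    exact ⟨h1, fun h => h2 ⟨t, ht, h⟩⟩

/-- `st(S, 𝒰) = ⋃ {U ∈ 𝒰 : U ∩ S ≠ ∅}`. -/
def starSet {X : Type*} (S : Set X) (𝒰 : Set (Set X)) : Set X :=
  ⋃₀ { U ∈ 𝒰 | (U ∩ S).Nonempty }

def StarMenger (X : Type*) [TopologicalSpace X] : Prop :=
  ∀ 𝒰 : ℕ → Set (Set X), (∀ n, ∀ U ∈ 𝒰 n, IsOpen U) → (∀ n, ⋃₀ 𝒰 n = univ) →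
    ∃ ℱ : ℕ → Set (Set X), (∀ n, ℱ n ⊆ 𝒰 n ∧ (ℱ n).Finite) ∧
      (⋃ n, starSet (⋃₀ ℱ n) (𝒰 n)) = univ

def StarHurewicz (X : Type*) [TopologicalSpace X] : Prop :=
  ∀ 𝒰 : ℕ → Set (Set X), (∀ n, ∀ U ∈ 𝒰 n, IsOpen U) → (∀ n, ⋃₀ 𝒰 n = univ) →
    ∃ ℱ : ℕ → Set (Set X), (∀ n, ℱ n ⊆ 𝒰 n ∧ (ℱ n).Finite) ∧
      ∀ x : X, ∀ᶠ n in atTop, x ∈ starSet (⋃₀ ℱ n) (𝒰 n)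

def StarRothberger (X : Type*) [TopologicalSpace X] : Prop :=
  ∀ 𝒰 : ℕ → Set (Set X), (∀ n, ∀ U ∈ 𝒰 n, IsOpen U) → (∀ n, ⋃₀ 𝒰 n = univ) →
    ∃ U : ℕ → Set X, (∀ n, U n ∈ 𝒰 n) ∧ (⋃ n, starSet (U n) (𝒰 n)) = univ

def StronglyStarMenger (X : Type*) [TopologicalSpace X] : Prop :=
  ∀ 𝒰 : ℕ → Set (Set X), (∀ n, ∀ U ∈ 𝒰 n, IsOpen U) → (∀ n, ⋃₀ 𝒰 n = univ) →
    ∃ F : ℕ → Set X, (∀ n, (F n).Finite) ∧ (⋃ n, starSet (F n) (𝒰 n)) = univ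

def StronglyStarHurewicz (X : Type*) [TopologicalSpace X] : Prop :=
  ∀ 𝒰 : ℕ → Set (Set X), (∀ n, ∀ U ∈ 𝒰 n, IsOpen U) → (∀ n, ⋃₀ 𝒰 n = univ) →
    ∃ F : ℕ → Set X, (∀ n, (F n).Finite) ∧
      ∀ x : X, ∀ᶠ n in atTop, x ∈ starSet (F n) (𝒰 n)

/-- if `{F_α : α < κ}` is cofinal in `Fin(κ)^ℕ`, then so is the family
`F'_α(n) := F_α(n) \ {α}`. -/
theorem cofinal_erase (κ : Cardinal.{0}) (hκ : Cardinal.aleph0 ≤ κ)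
    (F : Quotient.out κ → ℕ → Finset (Quotient.out κ))
    (hF : ∀ g : ℕ → Finset (Quotient.out κ), ∃ α, ∀ n, g n ⊆ F α n) :
    ∀ g : ℕ → Finset (Quotient.out κ), ∃ α, ∀ n,
      (g n : Set (Quotient.out κ)) ⊆ (F α n : Set (Quotient.out κ)) \ {α} := by
  intro g
  haveI : Infinite (Quotient.out κ) := by
    rw [Cardinal.infinite_iff, Cardinal.mk_out]; exact hκ
  haveI : DecidableEq (Quotient.out κ) := Classical.decEq _
  set S : Set (Quotient.out κ) := ⋃ n, (g n : Set (Quotient.out κ)) with hS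
  have hScount : S.Countable := Set.countable_iUnion fun n => (g n).countable_toSet
  by_cases hSne : S.Nonempty
  · obtain ⟨e, he⟩ := hScount.exists_eq_range hSne
    choose x hx using fun n => Infinite.exists_notMem_finset (F (e n) n)
    obtain ⟨α, hα⟩ := hF (fun n => insert (x n) (g n))
    refine ⟨α, fun n => ?_⟩
    intro y hy
    have hyS : y ∈ F α n := hα n (Finset.mem_insert_of_mem hy)
    refine ⟨hyS, ?_⟩
    intro hmem
    have hyα : y = α := hmem
    subst hyα
    have hαS : y ∈ S := Set.mem_iUnion.2 ⟨n, hy⟩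
    rw [he] at hαS
    obtain ⟨m, rfl⟩ := hαS
    exact hx m (hα m (Finset.mem_insert_self _ _))
  · obtain ⟨α, hα⟩ := hF g
    refine ⟨α, fun n => ?_⟩
    intro y hy
    exact absurd ⟨y, Set.mem_iUnion.2 ⟨n, hy⟩⟩ hSne
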